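/- Let p > 3 be a prime, F an algebraically closed field of characteristic p, n ≥ 1 an integer, and s = p^n − 2. Let L be a Lie algebra over F admitting an F-basis (e_i) indexed by the integers i with −1 ≤ i ≤ s, whose bracket satisfies ⁅e_i, e_j⁆ = (C(i+j+1, j) − C(i+j+1, i)) · e_{i+j} whenever −1 ≤ i+j ≤ s, and ⁅e_i, e_j⁆ = 0 otherwise, where C(a,b) denotes the binomial coefficient reduced modulo p into F (with the convention C(a,b) = 0 if b < 0 or b > a). Then L is generated by one and a half elements: for every nonzero x ∈ L there exists y ∈ L such that the smallest Lie subalgebra of L containing x and y is L itself. -/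

import Mathlib

noncomputable def binomF (F : Type) [Field F] (a b : ℤ) : F :=
  if 0 ≤ b ∧ b ≤ a then ((a.toNat.choose b.toNat : ℕ) : F) else 0

open Finset Polynomial

private lemma binomF_eval (F : Type) [Field F] (a b : ℤ) (h0 : 0 ≤ b) (h1 : b ≤ a) :
    binomF F a b = ((a.toNat.choose b.toNat : ℕ) : F) := if_pos ⟨h0, h1⟩

private lemma binomF_of_neg (F : Type) [Field F] (a b : ℤ) (h : b < 0) : binomF F a b = 0 :=
  if_neg (by omega)

private lemma binomF_self (F : Type) [Field F] (a : ℤ) (h : 0 ≤ a) : binomF F a a = 1 := by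
  rw [binomF_eval F a a h le_rfl, Nat.choose_self, Nat.cast_one]

private lemma binomF_zero (F : Type) [Field F] (a : ℤ) (h : 0 ≤ a) : binomF F a 0 = 1 := by
  rw [binomF_eval F a 0 le_rfl h, Int.toNat_zero, Nat.choose_zero_right, Nat.cast_one]

private lemma geomSumPrim {F : Type} [Field F] {N : ℕ} {ζ : F} (hζ : IsPrimitiveRoot ζ N)
    (r : ℕ) : ∑ k ∈ range N, (ζ ^ r) ^ k = if N ∣ r then (N : F) else 0 := by
  by_cases h : N ∣ r
  · simp [(hζ.pow_eq_one_iff_dvd r).2 h, h]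
  · have h1 : ζ ^ r ≠ 1 := fun hh => h ((hζ.pow_eq_one_iff_dvd r).1 hh)
    rw [geom_sum_eq h1, if_neg h]
    have : (ζ ^ r) ^ N = 1 := by
      rw [← pow_mul, mul_comm, pow_mul, hζ.pow_eq_one, one_pow]
    rw [this, sub_self, zero_div]

private lemma ad_pow_eigen {F L : Type} [Field F] [LieRing L] [LieAlgebra F L]
    (y : L) {v : L} {μ : F} (h : ⁅y, v⁆ = μ • v) (i : ℕ) :
    ((LieAlgebra.ad F L y) ^ i) v = μ ^ i • v := by
  induction i with
  | zero => simp
  | succ i ih =>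
      rw [pow_succ', Module.End.mul_apply, ih]
      show ⁅y, _⁆ = _
      rw [lie_smul, h, smul_smul, pow_succ, mul_comm]

private lemma aeval_eigen {F L : Type} [Field F] [LieRing L] [LieAlgebra F L]
    (y : L) {v : L} {μ : F} (h : ⁅y, v⁆ = μ • v) (P : F[X]) :
    (Polynomial.aeval (LieAlgebra.ad F L y) P) v = P.eval μ • v := by
  induction P using Polynomial.induction_on' with
  | add p q hp hq => simp [map_add, LinearMap.add_apply, hp, hq, add_smul]
  | monomial i a =>
      rw [aeval_monomial, Module.End.mul_apply, ad_pow_eigen y h i]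
      rw [Polynomial.eval_monomial]
      rw [map_smul]
      simp [Algebra.algebraMap_eq_smul_one, smul_smul, mul_comm]

private lemma aeval_mem {F L : Type} [Field F] [LieRing L] [LieAlgebra F L]
    (M : LieSubalgebra F L) {y v : L} (hy : y ∈ M) (hv : v ∈ M) (P : F[X]) :
    (Polynomial.aeval (LieAlgebra.ad F L y) P) v ∈ M := by
  have hpow : ∀ i : ℕ, ((LieAlgebra.ad F L y) ^ i) v ∈ M := by
    intro i
    induction i with
    | zero => simpa using hv
    | succ i ih =>
        rw [pow_succ', Module.End.mul_apply]
        exact M.lie_mem hy ih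
  rw [Polynomial.aeval_eq_sum_range, LinearMap.coe_sum, Finset.sum_apply]
  exact _root_.sum_mem fun i _ => by
    rw [LinearMap.smul_apply]; exact M.smul_mem _ (hpow i)

private lemma lie_sum' (F : Type) {L : Type} [Field F] [LieRing L] [LieAlgebra F L]
    (a : L) {ι : Type} (s : Finset ι) (g : ι → L) :
    ⁅a, ∑ i ∈ s, g i⁆ = ∑ i ∈ s, ⁅a, g i⁆ :=
  map_sum (LieAlgebra.ad F L a) g s

private lemma sum_u_expand {F L : Type} [Field F] [LieRing L] [LieAlgebra F L]
    (f : ℕ → L) (lam : ℕ → F) (w : ℕ → F) (t : F) (N : ℕ) :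
    ∑ k ∈ range N, w k • ((∑ m ∈ range N, lam k ^ m • f m) + (2*t) • f N)
      = (∑ m ∈ range N, (∑ k ∈ range N, w k * lam k ^ m) • f m)
        + (2*t*(∑ k ∈ range N, w k)) • f N := by
  simp only [smul_add, Finset.sum_add_distrib, Finset.smul_sum, smul_smul]
  rw [Finset.sum_comm]
  congr 1
  · exact Finset.sum_congr rfl fun m _ => by rw [← Finset.sum_smul]
  · rw [← Finset.sum_smul]
    congr 1
    rw [← Finset.sum_mul, mul_comm]

private lemma eigen_bracket {F L : Type} [Field F] [LieRing L] [LieAlgebra F L]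
    (f : ℕ → L) (K' : ℕ) (t lam : F)
    (hbr1 : ∀ m, m < K'+2 → ⁅f 0, f (m+1)⁆ = f m)
    (hbr2 : ⁅f (K'+2), f 0⁆ = -f (K'+1))
    (hbr3 : ⁅f (K'+2), f 1⁆ = (2:F) • f (K'+2))
    (hbr4 : ∀ m, 2 ≤ m → m ≤ K'+2 → ⁅f (K'+2), f m⁆ = 0)
    (hlamN : lam ^ (K'+2) = t) :
    ⁅f 0 + t • f (K'+2), (∑ m ∈ range (K'+2), lam ^ m • f m) + (2*t) • f (K'+2)⁆
      = lam • ((∑ m ∈ range (K'+2), lam ^ m • f m) + (2*t) • f (K'+2)) := by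
  have h1 : ⁅f 0, ∑ m ∈ range (K'+2), lam ^ m • f m⁆
      = ∑ m ∈ range (K'+1), lam ^ (m+1) • f m := by
    rw [lie_sum' F]
    simp only [lie_smul]
    rw [Finset.sum_range_succ' (fun m => lam ^ m • ⁅f 0, f m⁆) (K'+1)]
    simp only [pow_zero, one_smul, lie_self, smul_zero, add_zero]
    exact Finset.sum_congr rfl fun m hm => by
      simp only [mem_range] at hm
      rw [hbr1 m (by omega)]
  have h2 : ⁅f (K'+2), ∑ m ∈ range (K'+2), lam ^ m • f m⁆
      = -f (K'+1) + (2*lam) • f (K'+2) := by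
    rw [lie_sum' F]
    simp only [lie_smul]
    rw [Finset.sum_range_succ' (fun m => lam ^ m • ⁅f (K'+2), f m⁆) (K'+1),
        Finset.sum_range_succ' (fun m => lam ^ (m+1) • ⁅f (K'+2), f (m+1)⁆) K']
    have hz : ∀ m ∈ range K', lam ^ (m+1+1) • ⁅f (K'+2), f (m+1+1)⁆ = 0 := by
      intro m hm
      rw [hbr4 (m+2) (by omega) (by simp at hm; omega), smul_zero]
    rw [Finset.sum_congr rfl hz, Finset.sum_const_zero, zero_add]
    rw [hbr2, hbr3, pow_zero, pow_one, one_smul, smul_smul]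
    module
  simp only [add_lie, smul_lie, lie_add, lie_smul, lie_self, smul_zero, add_zero]
  rw [h1, h2, hbr1 (K'+1) (by omega)]
  have hcoef : ∀ m, lam • lam ^ m • f m = lam ^ (m+1) • f m := by
    intro m; rw [smul_smul, ← pow_succ']
  conv_rhs => rw [smul_add, Finset.smul_sum,
    Finset.sum_range_succ (fun m => lam • lam ^ m • f m) (K'+1)]
  simp only [hcoef]
  rw [show K'+1+1 = K'+2 from rfl, hlamN]
  module

theorem zassenhaus_generated_by_one_and_a_half
    (p : ℕ) (hp : p.Prime) (hp3 : 3 < p)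
    (F : Type) [Field F] [IsAlgClosed F] [CharP F p]
    (n : ℕ) (hn : 1 ≤ n) (s : ℤ) (hs : s = (p : ℤ) ^ n - 2)
    (L : Type) [LieRing L] [LieAlgebra F L] (e : ℤ → L)
    (hli : LinearIndependent F fun i : Set.Icc (-1 : ℤ) s => e i)
    (hspan : Submodule.span F (e '' Set.Icc (-1 : ℤ) s) = ⊤)
    (hbrack : ∀ i j : ℤ, i ∈ Set.Icc (-1 : ℤ) s → j ∈ Set.Icc (-1 : ℤ) s →
      ⁅e i, e j⁆ =
        if i + j ∈ Set.Icc (-1 : ℤ) s then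
          (binomF F (i + j + 1) j - binomF F (i + j + 1) i) • e (i + j)
        else 0) :
    ∀ x : L, x ≠ 0 → ∃ y : L, LieSubalgebra.lieSpan F L {x, y} = ⊤ := by
  classical
  intro x hx
  -- ## numerics
  obtain ⟨q, hq⟩ : ∃ q : ℕ, q = p ^ n := ⟨_, rfl⟩
  have hp5 : 5 ≤ p := by
    have h4 : p ≠ 4 := by rintro rfl; norm_num at hp
    omega
  have hq5 : 5 ≤ q := hq ▸ le_trans hp5 (Nat.le_self_pow (by omega) p)
  obtain ⟨K', hK'q⟩ : ∃ K', q = K' + 3 := ⟨q - 3, by omega⟩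
  obtain ⟨N, hN⟩ : ∃ N : ℕ, N = K' + 2 := ⟨_, rfl⟩
  have hNq : N + 1 = q := by omega
  have hpF : (p : F) = 0 := CharP.cast_eq_zero F p
  have hqF : (q : F) = 0 := by
    rw [hq]; push_cast; rw [hpF]; exact zero_pow (by omega)
  have hNF : (N : F) = -1 := by
    have : ((N : ℕ) : F) = ((q : ℕ) : F) - 1 := by
      rw [← hNq]; push_cast; ring
    rw [this, hqF]; ring
  have h1F : (1 : F) ≠ 0 := one_ne_zero
  have h2F : (2 : F) ≠ 0 := by
    intro h2
    have : ((2 : ℕ) : F) = 0 := by push_cast; exact h2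
    have := Nat.le_of_dvd (by norm_num) ((CharP.cast_eq_zero_iff F p 2).1 this)
    omega
  have hsq : s = (q : ℤ) - 2 := by rw [hs, hq]; push_cast; ring
  have hq5' : (5 : ℤ) ≤ (q : ℤ) := by exact_mod_cast hq5
  have hNZ : ((N : ℕ) : ℤ) = (q : ℤ) - 1 := by omega
  -- ## the reindexed basis f
  obtain ⟨f, hf⟩ : ∃ f : ℕ → L, f = fun m : ℕ => e ((m : ℤ) - 1) := ⟨_, rfl⟩
  have hbr1 : ∀ m, m < N → ⁅f 0, f (m+1)⁆ = f m := by
    intro m hm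
    simp only [hf]
    rw [show ((0:ℕ) : ℤ) - 1 = -1 by norm_num, show (((m+1:ℕ)) : ℤ) - 1 = (m:ℤ) by push_cast; ring]
    rw [hbrack (-1) (m:ℤ) (by rw [Set.mem_Icc]; omega) (by rw [Set.mem_Icc]; omega)]
    rw [if_pos (by rw [Set.mem_Icc]; omega)]
    rw [show (-1:ℤ) + (m:ℤ) + 1 = (m:ℤ) by ring]
    rw [binomF_self F (m:ℤ) (by omega), binomF_of_neg F (m:ℤ) (-1) (by norm_num)]
    rw [show (-1:ℤ) + (m:ℤ) = (m:ℤ) - 1 by ring, sub_zero, one_smul]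
  have hbr2 : ⁅f N, f 0⁆ = -f (K'+1) := by
    simp only [hf]
    rw [show ((N:ℕ) : ℤ) - 1 = s by omega, show ((0:ℕ) : ℤ) - 1 = -1 by norm_num,
        show (((K'+1:ℕ)) : ℤ) - 1 = s - 1 by push_cast; omega]
    rw [hbrack s (-1) (by rw [Set.mem_Icc]; omega) (by rw [Set.mem_Icc]; omega)]
    rw [if_pos (by rw [Set.mem_Icc]; omega)]
    rw [show s + -1 + 1 = s by ring]
    rw [binomF_self F s (by omega), binomF_of_neg F s (-1) (by norm_num)]
    rw [show s + -1 = s - 1 by ring, zero_sub, neg_smul, one_smul]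
  have hbr3 : ⁅f N, f 1⁆ = (2 : F) • f N := by
    simp only [hf]
    rw [show ((N:ℕ) : ℤ) - 1 = s by omega, show ((1:ℕ) : ℤ) - 1 = 0 by norm_num]
    rw [hbrack s 0 (by rw [Set.mem_Icc]; omega) (by rw [Set.mem_Icc]; omega)]
    rw [if_pos (by rw [Set.mem_Icc]; omega)]
    rw [show s + 0 + 1 = s + 1 by ring, show s + (0:ℤ) = s by ring]
    rw [binomF_zero F (s+1) (by omega)]
    rw [binomF_eval F (s+1) s (by omega) (by omega)]
    have e1 : (s+1).toNat = N := by omega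
    have e2 : s.toNat = K'+1 := by omega
    rw [e1, e2]
    have e3 : N.choose (K'+1) = N := by
      rw [hN, show K'+1 = (K'+2) - 1 by omega, Nat.choose_symm (by omega), Nat.choose_one_right]
    rw [e3, hNF]
    norm_num
  have hbr4 : ∀ m, 2 ≤ m → m ≤ N → ⁅f N, f m⁆ = 0 := by
    intro m h2 hmN
    simp only [hf]
    rw [show ((N:ℕ) : ℤ) - 1 = s by omega]
    rw [hbrack s ((m:ℤ) - 1) (by rw [Set.mem_Icc]; omega) (by rw [Set.mem_Icc]; omega)]
    rw [if_neg (by rw [Set.mem_Icc]; omega)]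
  -- ## coordinates of x
  have hxmem : x ∈ Submodule.span F (e '' Set.Icc (-1:ℤ) s) := by
    rw [hspan]; exact Submodule.mem_top
  obtain ⟨l, hlsupp, hlx⟩ := (Finsupp.mem_span_image_iff_linearCombination F).1 hxmem
  obtain ⟨d, hd⟩ : ∃ d : ℕ → F, d = fun m : ℕ => l ((m:ℤ) - 1) := ⟨_, rfl⟩
  have hxsum : x = ∑ m ∈ range (N+1), d m • f m := by
    rw [← hlx, Finsupp.linearCombination_apply, Finsupp.sum]
    have hsub : l.support ⊆ Finset.Icc (-1:ℤ) s := by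
      intro i hi
      have h1 := (Finsupp.mem_supported F l).1 hlsupp hi
      rw [Set.mem_Icc] at h1
      rw [Finset.mem_Icc]
      exact h1
    rw [Finset.sum_subset hsub (by intro i _ hni; rw [Finsupp.notMem_support_iff.1 hni, zero_smul])]
    have hbij : Finset.Icc (-1:ℤ) s
        = (Finset.range (N+1)).map ⟨fun m : ℕ => (m:ℤ)-1, fun a b hab => by dsimp only at hab; omega⟩ := by
      ext i
      simp only [Finset.mem_Icc, Finset.mem_map, Finset.mem_range, Function.Embedding.coeFn_mk]
      constructor
      · intro hi; exact ⟨(i+1).toNat, by omega, by change ((i+1).toNat : ℤ) - 1 = i; omega⟩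
      · rintro ⟨m, hm, rfl⟩; change -1 ≤ (m:ℤ) - 1 ∧ (m:ℤ) - 1 ≤ s; omega
    rw [hbij, Finset.sum_map]
    simp only [hf, hd, Function.Embedding.coeFn_mk]
    rfl
  have hd0 : ∃ m₀, m₀ ≤ N ∧ d m₀ ≠ 0 := by
    by_contra hno
    push_neg at hno
    apply hx
    rw [hxsum]
    exact Finset.sum_eq_zero fun m hm => by
      rw [hno m (by simp only [mem_range] at hm; omega), zero_smul]
  -- ## the polynomial
  obtain ⟨Φ, hΦ⟩ : ∃ Φ : F[X], Φ = C (d 0) * X^(3*N-1) - C (d N) * X^(2*N-1)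
      - ∑ m ∈ Finset.Icc 1 (K'+1), C (d m) * X^(3*N-1-m) := ⟨_, rfl⟩
  have hcsum : ∀ r : ℕ, (∑ m ∈ Finset.Icc 1 (K'+1), C (d m) * X^(3*N-1-m)).coeff r
      = ∑ m ∈ Finset.Icc 1 (K'+1), (if r = 3*N-1-m then d m else 0) := by
    intro r
    rw [Polynomial.finset_sum_coeff]
    exact Finset.sum_congr rfl fun m hm => by
      rw [coeff_C_mul, coeff_X_pow, mul_ite, mul_one, mul_zero]
  have hΦne : Φ ≠ 0 := by
    intro h0
    obtain ⟨m₀, hm₀N, hdm₀⟩ := hd0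
    rcases (by omega : m₀ = 0 ∨ m₀ = N ∨ (1 ≤ m₀ ∧ m₀ ≤ K'+1)) with h | h | h
    · have hc : Φ.coeff (3*N-1) = d 0 := by
        rw [hΦ, coeff_sub, coeff_sub, coeff_C_mul, coeff_C_mul, coeff_X_pow, coeff_X_pow, hcsum]
        rw [if_pos rfl, if_neg (by omega)]
        rw [Finset.sum_eq_zero (fun m hm => by
          simp only [Finset.mem_Icc] at hm; rw [if_neg (by omega)])]
        ring
      rw [h0, coeff_zero] at hc
      exact hdm₀ (h ▸ hc.symm)
    · have hc : Φ.coeff (2*N-1) = -(d N) := by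
        rw [hΦ, coeff_sub, coeff_sub, coeff_C_mul, coeff_C_mul, coeff_X_pow, coeff_X_pow, hcsum]
        rw [if_neg (by omega), if_pos rfl]
        rw [Finset.sum_eq_zero (fun m hm => by
          simp only [Finset.mem_Icc] at hm; rw [if_neg (by omega)])]
        ring
      rw [h0, coeff_zero] at hc
      exact hdm₀ (h ▸ (neg_eq_zero.1 hc.symm))
    · have hc : Φ.coeff (3*N-1-m₀) = -(d m₀) := by
        rw [hΦ, coeff_sub, coeff_sub, coeff_C_mul, coeff_C_mul, coeff_X_pow, coeff_X_pow, hcsum]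
        rw [if_neg (by omega), if_neg (by omega)]
        rw [Finset.sum_eq_single m₀ (fun b hb hbne => by
          simp only [Finset.mem_Icc] at hb; rw [if_neg (by omega)])
          (fun hnm => absurd (Finset.mem_Icc.2 (by omega)) hnm)]
        rw [if_pos rfl]
        ring
      rw [h0, coeff_zero] at hc
      exact hdm₀ (neg_eq_zero.1 hc.symm)
  -- ## choice of t
  obtain ⟨t, ht⟩ := Infinite.exists_notMem_finset
    ((Φ.roots.map (· ^ N)).toFinset ∪ {0})
  have ht0 : t ≠ 0 := by
    intro h; exact ht (by simp [h])
  have htgood : ∀ μ : F, μ ^ N = t → Φ.eval μ ≠ 0 := by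
    intro μ hμ hev
    refine ht (Finset.mem_union_left _ ?_)
    rw [Multiset.mem_toFinset, Multiset.mem_map]
    exact ⟨μ, (mem_roots hΦne).2 hev, hμ⟩
  -- ## roots and eigenvalues
  obtain ⟨l0, hl0⟩ := IsAlgClosed.exists_pow_nat_eq t (n := N) (by omega)
  have hl0ne : l0 ≠ 0 := by
    intro h; rw [h, zero_pow (by omega : N ≠ 0)] at hl0; exact ht0 hl0.symm
  haveI : NeZero ((N : ℕ) : F) := ⟨by rw [hNF]; intro h; exact h1F (neg_eq_zero.mp h)⟩
  obtain ⟨ζ, hζ⟩ := HasEnoughRootsOfUnity.exists_primitiveRoot F N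
  have hζne : ζ ≠ 0 := by
    intro h
    have := hζ.pow_eq_one
    rw [h, zero_pow (by omega : N ≠ 0)] at this
    exact h1F this.symm
  obtain ⟨lam, hlam⟩ : ∃ lam : ℕ → F, lam = fun k => l0 * ζ ^ k := ⟨_, rfl⟩
  have hlamN : ∀ k, lam k ^ N = t := by
    intro k
    rw [hlam]
    show (l0 * ζ ^ k) ^ N = t
    rw [mul_pow, ← pow_mul, mul_comm k N, pow_mul, hζ.pow_eq_one, one_pow, mul_one, hl0]
  have hlamne : ∀ k, lam k ≠ 0 := by
    intro k; rw [hlam]; exact mul_ne_zero hl0ne (pow_ne_zero _ hζne)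
  have hlaminj : ∀ k1, k1 < N → ∀ k2, k2 < N → lam k1 = lam k2 → k1 = k2 := by
    intro k1 h1 k2 h2 hh
    rw [hlam] at hh
    exact hζ.pow_inj h1 h2 (mul_left_cancel₀ hl0ne hh)
  -- ## power sums
  have PS : ∀ r : ℕ, ∑ k ∈ range N, lam k ^ r = if N ∣ r then l0 ^ r * (N : F) else 0 := by
    intro r
    have h1 : ∀ k : ℕ, lam k ^ r = l0 ^ r * (ζ ^ r) ^ k := by
      intro k
      rw [hlam]
      show (l0 * ζ ^ k) ^ r = _
      rw [mul_pow, ← pow_mul, mul_comm k r, pow_mul]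
    rw [Finset.sum_congr rfl fun k _ => h1 k, ← Finset.mul_sum, geomSumPrim hζ r]
    split_ifs <;> simp
  have PSsmall : ∀ r, r < N → (∑ k ∈ range N, lam k ^ r) = if r = 0 then (-1 : F) else 0 := by
    intro r hr
    rw [PS r]
    by_cases h : r = 0
    · subst h; rw [if_pos (dvd_zero N), if_pos rfl, pow_zero, one_mul, hNF]
    · rw [if_neg (fun hdvd => h (by have := Nat.le_of_dvd (by omega) hdvd; omega)), if_neg h]
  have PSbig : ∀ r, 0 < r → r < 2*N → (∑ k ∈ range N, lam k ^ r) = if r = N then -t else 0 := by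
    intro r h1 h2
    rw [PS r]
    by_cases h : r = N
    · subst h; rw [if_pos dvd_rfl, if_pos rfl, hl0, hNF]; ring
    · rw [if_neg ?_, if_neg h]
      intro hdvd
      obtain ⟨c, rfl⟩ := hdvd
      rcases Nat.lt_or_ge c 2 with hc | hc
      · interval_cases c <;> omega
      · have : 2*N ≤ N * c := by nlinarith
        omega
  -- ## the eigenvectors and coefficients
  obtain ⟨y, hy⟩ : ∃ y : L, y = f 0 + t • f N := ⟨_, rfl⟩
  obtain ⟨u, hu⟩ : ∃ u : ℕ → L,
      u = fun k => (∑ m ∈ range N, lam k ^ m • f m) + (2*t) • f N := ⟨_, rfl⟩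
  obtain ⟨g0, hg0⟩ : ∃ g0 : F, g0 = d 0 - d N / t := ⟨_, rfl⟩
  obtain ⟨a, ha⟩ : ∃ a : ℕ → F,
      a = fun k => g0 - (∑ m ∈ Finset.Icc 1 (K'+1), d m * lam k ^ (N-m)) / t := ⟨_, rfl⟩
  obtain ⟨a0, ha0⟩ : ∃ a0 : F, a0 = 2 * d 0 - d N / t := ⟨_, rfl⟩
  have heig : ∀ k, ⁅y, u k⁆ = lam k • u k := by
    intro k
    rw [hy]
    simp only [hu]
    have hb1 := hbr1; have hb2 := hbr2; have hb3 := hbr3; have hb4 := hbr4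
    have hb5 := hlamN k
    rw [hN] at hb1 hb2 hb3 hb4 hb5 ⊢
    exact eigen_bracket f K' t (lam k) hb1 hb2 hb3 hb4 hb5
  have hSa : ∀ m, m < N → (∑ k ∈ range N, a k * lam k ^ m) = (if m = 0 then -g0 else d m) := by
    intro m hm
    simp only [ha]
    have hexp : ∀ k : ℕ, (g0 - (∑ m' ∈ Finset.Icc 1 (K'+1), d m' * lam k ^ (N-m')) / t) * lam k ^ m
        = g0 * lam k ^ m - (∑ m' ∈ Finset.Icc 1 (K'+1), d m' * lam k ^ (N-m'+m)) / t := by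
      intro k
      rw [sub_mul, div_mul_eq_mul_div, Finset.sum_mul]
      congr 2
      exact Finset.sum_congr rfl fun m' hm' => by rw [mul_assoc, ← pow_add]
    rw [Finset.sum_congr rfl fun k _ => hexp k, Finset.sum_sub_distrib, ← Finset.mul_sum,
        ← Finset.sum_div, Finset.sum_comm]
    have hinner : ∀ m' ∈ Finset.Icc 1 (K'+1), (∑ k ∈ range N, d m' * lam k ^ (N-m'+m))
        = if m' = m then d m' * (-t) else 0 := by
      intro m' hm'
      simp only [Finset.mem_Icc] at hm'
      rw [← Finset.mul_sum, PSbig (N-m'+m) (by omega) (by omega)]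
      by_cases h : m' = m
      · rw [if_pos (by omega), if_pos h]
      · rw [if_neg (by omega), if_neg h, mul_zero]
    rw [Finset.sum_congr rfl hinner,
        Finset.sum_ite_eq' (Finset.Icc 1 (K'+1)) m (fun m' => d m' * (-t))]
    by_cases h : m = 0
    · subst h
      rw [if_neg (by simp), if_pos rfl, PSsmall 0 (by omega), if_pos rfl]
      rw [zero_div, sub_zero]
      ring
    · rw [if_pos (Finset.mem_Icc.2 (by omega)), PSsmall m hm, if_neg h, if_neg h]
      rw [mul_zero, zero_sub]
      field_simp
  have hSa0 : (∑ k ∈ range N, a k) = -g0 := by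
    have h1 := hSa 0 (by omega)
    simp only [pow_zero, mul_one, if_pos rfl] at h1
    exact h1
  have hdecomp : x = a0 • y + ∑ k ∈ range N, a k • u k := by
    rw [hxsum, hy]
    simp only [hu]
    rw [sum_u_expand f lam a t N]
    have hSrw : (∑ m ∈ range N, (∑ k ∈ range N, a k * lam k ^ m) • f m)
        = ∑ m ∈ range N, (if m = 0 then -g0 else d m) • f m :=
      Finset.sum_congr rfl (fun m hm => by rw [hSa m (mem_range.1 hm)])
    rw [hSrw, hSa0]
    have h0mem : (0:ℕ) ∈ range N := mem_range.2 (by omega)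
    have hsplit1 : ∑ m ∈ range (N+1), d m • f m
        = ((∑ m ∈ (range N).erase 0, d m • f m) + d 0 • f 0) + d N • f N := by
      rw [Finset.sum_range_succ, Finset.sum_erase_add (range N) _ h0mem]
    have hsplit2 : (∑ m ∈ range N, (if m = 0 then -g0 else d m) • f m)
        = (∑ m ∈ (range N).erase 0, d m • f m) + (-g0) • f 0 := by
      rw [← Finset.sum_erase_add (range N) _ h0mem, if_pos rfl]
      congr 1
      exact Finset.sum_congr rfl fun m hm => by rw [if_neg (Finset.ne_of_mem_erase hm)]
    rw [hsplit1, hsplit2]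
    have hc1 : a0 + -g0 = d 0 := by rw [ha0, hg0]; ring
    have hc2 : a0 * t + 2*t*(-g0) = d N := by rw [ha0, hg0]; field_simp; ring
    match_scalars
    · ring
    · rw [← hc1]; ring
    · rw [← hc2]; ring
  have hane : ∀ k, a k ≠ 0 := by
    have key : ∀ k : ℕ, Φ.eval (lam k) = t * lam k ^ (2*N-1) * a k := by
      intro k
      have hsums : lam k ^ (2*N-1) * (∑ m ∈ Finset.Icc 1 (K'+1), d m * lam k ^ (N-m))
          = ∑ m ∈ Finset.Icc 1 (K'+1), d m * lam k ^ (3*N-1-m) := by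
        rw [Finset.mul_sum]
        refine Finset.sum_congr rfl fun m hm => ?_
        simp only [Finset.mem_Icc] at hm
        rw [mul_left_comm, ← pow_add]
        congr 2
        omega
      rw [hΦ]
      simp only [eval_sub, eval_mul, eval_pow, eval_C, eval_X, eval_finset_sum]
      rw [← hsums]
      simp only [ha]
      have hNpow : lam k ^ (3*N-1) = t * lam k ^ (2*N-1) := by
        rw [← hlamN k, ← pow_add]
        congr 1
        omega
      rw [hNpow, hg0]
      field_simp
    intro k hak
    exact htgood (lam k) (hlamN k) (by rw [key k, hak, mul_zero])
  -- ## conclusion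
  refine ⟨y, ?_⟩
  set M := LieSubalgebra.lieSpan F L {x, y} with hM
  have hxM : x ∈ M := LieSubalgebra.subset_lieSpan (Set.mem_insert _ _)
  have hyM : y ∈ M := LieSubalgebra.subset_lieSpan (Set.mem_insert_of_mem _ rfl)
  have huM : ∀ k0, k0 < N → u k0 ∈ M := by
    intro k0 hk0
    obtain ⟨P, hP⟩ : ∃ P : F[X], P = (∏ i ∈ (range N).erase k0, (X - C (lam i))) * X := ⟨_, rfl⟩
    have hPy : P.eval 0 = 0 := by rw [hP]; simp
    have hPk : ∀ k, k < N → k ≠ k0 → P.eval (lam k) = 0 := by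
      intro k hk hkne
      rw [hP, eval_mul]
      apply mul_eq_zero_of_left
      rw [eval_prod]
      refine Finset.prod_eq_zero (Finset.mem_erase.2 ⟨hkne, mem_range.2 hk⟩) ?_
      rw [eval_sub, eval_X, eval_C, sub_self]
    have hc : P.eval (lam k0) ≠ 0 := by
      rw [hP, eval_mul, eval_X, eval_prod]
      refine mul_ne_zero (Finset.prod_ne_zero_iff.2 fun i hi => ?_) (hlamne k0)
      rw [Finset.mem_erase, mem_range] at hi
      rw [eval_sub, eval_X, eval_C, sub_ne_zero]
      intro hEq
      exact hi.1 (hlaminj i hi.2 k0 hk0 hEq.symm)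
    have hval : (Polynomial.aeval (LieAlgebra.ad F L y) P) x
        = (a k0 * P.eval (lam k0)) • u k0 := by
      conv_lhs => rw [hdecomp]
      rw [map_add, map_smul, map_sum]
      rw [aeval_eigen y (show ⁅y, y⁆ = (0:F) • y by rw [lie_self, zero_smul]) P]
      rw [hPy, zero_smul, smul_zero, zero_add]
      have hterm : ∀ k ∈ range N, (Polynomial.aeval (LieAlgebra.ad F L y)) P (a k • u k)
          = (if k = k0 then (a k0 * P.eval (lam k0)) • u k0 else 0) := by
        intro k hk
        rw [map_smul, aeval_eigen y (heig k) P]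
        by_cases hkk : k = k0
        · subst hkk; rw [if_pos rfl, smul_smul]
        · rw [if_neg hkk, hPk k (mem_range.1 hk) hkk, zero_smul, smul_zero]
      rw [Finset.sum_congr rfl hterm, Finset.sum_ite_eq' (range N) k0
        (fun _ => (a k0 * P.eval (lam k0)) • u k0), if_pos (mem_range.2 hk0)]
    have hmem : (a k0 * P.eval (lam k0)) • u k0 ∈ M := by
      rw [← hval]; exact aeval_mem M hyM hxM P
    have := M.smul_mem (a k0 * P.eval (lam k0))⁻¹ hmem
    rwa [smul_smul, inv_mul_cancel₀ (mul_ne_zero (hane k0) hc), one_smul] at this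
  have humem : ∀ w : ℕ → F, (∑ k ∈ range N, w k • u k) ∈ M :=
    fun w => _root_.sum_mem fun k hk => M.smul_mem _ (huM k (mem_range.1 hk))
  have hfM : ∀ m, m ≤ N → f m ∈ M := by
    have hmid : ∀ m, 1 ≤ m → m ≤ K'+1 → f m ∈ M := by
      intro m h1 h2
      have hsum : ∑ k ∈ range N, lam k ^ (N-m) • u k = (-t) • f m := by
        simp only [hu]
        rw [sum_u_expand f lam (fun k => lam k ^ (N-m)) t N]
        have hA : ∀ m' ∈ range N, (∑ k ∈ range N, lam k ^ (N-m) * lam k ^ m')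
            = if m' = m then -t else 0 := by
          intro m' hm'
          simp only [mem_range] at hm'
          rw [Finset.sum_congr rfl fun k _ => (pow_add (lam k) (N-m) m').symm,
              PSbig ((N-m)+m') (by omega) (by omega)]
          by_cases h : m' = m
          · rw [if_pos (by omega), if_pos h]
          · rw [if_neg (by omega), if_neg h]
        rw [Finset.sum_congr rfl fun m' hm' => by rw [hA m' hm']]
        rw [PSbig (N-m) (by omega) (by omega), if_neg (by omega), mul_zero, zero_smul, add_zero]
        rw [Finset.sum_eq_single m (fun b _ hb => by rw [if_neg hb, zero_smul])
          (fun hnm => absurd (mem_range.2 (by omega)) hnm)]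
        rw [if_pos rfl]
      have hin : (-t) • f m ∈ M := by rw [← hsum]; exact humem _
      have := M.smul_mem (-t)⁻¹ hin
      rwa [smul_smul, inv_mul_cancel₀ (neg_ne_zero.2 ht0), one_smul] at this
    have hz : ∑ k ∈ range N, (1:F) • u k = (-1:F) • f 0 + (2*t*(-1)) • f N := by
      simp only [hu]
      rw [sum_u_expand f lam (fun _ => (1:F)) t N]
      have hA : ∀ m' ∈ range N, (∑ k ∈ range N, (1:F) * lam k ^ m')
          = if m' = 0 then (-1:F) else 0 := by
        intro m' hm'
        simp only [mem_range] at hm'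
        rw [Finset.sum_congr rfl fun k _ => one_mul (lam k ^ m'), PSsmall m' hm']
      rw [Finset.sum_congr rfl fun m' hm' => by rw [hA m' hm']]
      rw [Finset.sum_eq_single 0 (fun b _ hb => by rw [if_neg hb, zero_smul])
        (fun hnm => absurd (mem_range.2 (by omega)) hnm)]
      rw [if_pos rfl]
      congr 2
      rw [Finset.sum_const, Finset.card_range, nsmul_eq_mul, mul_one, hNF]
    have hw : ((-1:F)) • f 0 + (2*t*(-1)) • f N ∈ M := by rw [← hz]; exact humem _
    have htN : t • f N ∈ M := by
      have hcomb := M.sub_mem (M.smul_mem (-1:F) hw) hyM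
      have heq : (-1:F) • ((-1:F) • f 0 + (2*t*(-1)) • f N) - y = t • f N := by
        rw [hy]; module
      rwa [heq] at hcomb
    have hfN : f N ∈ M := by
      have := M.smul_mem t⁻¹ htN
      rwa [smul_smul, inv_mul_cancel₀ ht0, one_smul] at this
    have hf0 : f 0 ∈ M := by
      have := M.sub_mem hyM htN
      rwa [hy, add_sub_cancel_right] at this
    intro m hmN
    rcases (by omega : m = 0 ∨ m = N ∨ (1 ≤ m ∧ m ≤ K'+1)) with h | h | h
    · exact h ▸ hf0
    · exact h ▸ hfN
    · exact hmid m h.1 h.2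
  have heM : ∀ i ∈ Set.Icc (-1 : ℤ) s, e i ∈ M := by
    intro i hi
    rw [Set.mem_Icc] at hi
    have h1 : e i = f (i+1).toNat := by
      rw [hf]
      show e i = e (((i+1).toNat : ℤ) - 1)
      congr 1
      omega
    rw [h1]
    exact hfM _ (by omega)
  have hle : Submodule.span F (e '' Set.Icc (-1 : ℤ) s) ≤ M.toSubmodule := by
    rw [Submodule.span_le]
    rintro _ ⟨i, hi, rfl⟩
    exact heM i hi
  rw [hspan] at hle
  rw [eq_top_iff]
  intro z _
  exact hle (Submodule.mem_top)
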